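/- Let A be a commutative ring, S ⊆ A a multiplicative subset of nonzerodivisors, and ρ : A → B a homomorphism of commutative rings such that ρ(s) is a nonzerodivisor of B for every s ∈ S and the induced map A/sA → B/ρ(s)B is an isomorphism for every s ∈ S (a Karoubi square). Then for every n ≥ 3, E_n(ρ(S)^{-1}B) = E_n(B)·E_n(S^{-1}A): every matrix in the elementary subgroup E_n(ρ(S)^{-1}B) can be written as a product ε_1 · ε_2, where ε_1 is the image of a matrix in E_n(B) and ε_2 is the image of a matrix in E_n(S^{-1}A) under the canonical localization maps into ρ(S)^{-1}B. -/

import Mathlib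

/-- A matrix is *elementary* if it differs from the identity matrix in
at most one nonzero off-diagonal entry. -/
def IsElemMat {A : Type*} [CommRing A] {n : ℕ} (E : Matrix (Fin n) (Fin n) A) : Prop :=
  ∃ (i j : Fin n) (c : A), i ≠ j ∧ E = Matrix.transvection i j c

/-- Membership in the elementary group `E_n(A)`: a product of elementary matrices. -/
def IsElementary {A : Type*} [CommRing A] {n : ℕ} (E : Matrix (Fin n) (Fin n) A) : Prop :=
  E ∈ Submonoid.closure { E : Matrix (Fin n) (Fin n) A | IsElemMat E }

/-- A row is unimodular if its entries generate the unit ideal. -/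
def IsUnimodular {A : Type*} [CommRing A] {n : ℕ} (v : Fin n → A) : Prop :=
  Ideal.span (Set.range v) = ⊤

/-- The standard unimodular row `e = (1,0,…,0)`. -/
def stdRow (A : Type*) [CommRing A] (n : ℕ) : Fin n → A := fun i => if i.1 = 0 then 1 else 0

/-- `f` and `g` lie in the same orbit of the right action of `E_n(A)`. -/
def ElemEquiv {A : Type*} [CommRing A] {n : ℕ} (f g : Fin n → A) : Prop :=
  ∃ E : Matrix (Fin n) (Fin n) A, IsElementary E ∧ Matrix.vecMul f E = g

theorem span_le_comap_span {A B : Type*} [CommRing A] [CommRing B] (ρ : A →+* B) (s : A) :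
    Ideal.span {s} ≤ Ideal.comap ρ (Ideal.span {ρ s}) := by
  rw [Ideal.span_le]
  intro x hx
  simp only [Set.mem_singleton_iff] at hx
  subst hx
  exact Ideal.mem_comap.mpr (Ideal.subset_span rfl)

namespace ElemKaroubi
open Matrix

variable {n : ℕ}

section MatrixIdentities
variable {R : Type*} [CommRing R]

lemma std_neg (i j : Fin n) (c : R) :
    Matrix.single i j (-c) = -Matrix.single i j c := by
  rw [show (-c) = (-1 : R) • c by simp, ← smul_single, neg_smul, one_smul]

lemma expand3 {M N P : Matrix (Fin n) (Fin n) R} :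
    (1 + M) * (1 + N) * (1 + P) = 1 + M + N + P + M*N + M*P + N*P + M*N*P := by
  noncomm_ring

lemma expand4 {M N P Q : Matrix (Fin n) (Fin n) R} :
    (1 + M) * (1 + N) * (1 + P) * (1 + Q) = 1 + M + N + P + Q + M*N + M*P + M*Q + N*P + N*Q
      + P*Q + M*N*P + M*N*Q + M*P*Q + N*P*Q + M*N*P*Q := by
  noncomm_ring

lemma trv_comm_disjoint (u v k l : Fin n) (huv : u ≠ v) (hkl : k ≠ l) (hvk : v ≠ k) (hul : u ≠ l)
    (x y : R) : transvection u v x * transvection k l y * transvection u v (-x)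
      = transvection k l y := by
  simp only [transvection, expand3, std_neg, mul_neg, neg_mul, neg_neg,
    single_mul_single_of_ne, single_mul_single_same,
    huv, hkl, hvk, hul, huv.symm, hkl.symm, hvk.symm, hul.symm,
    Ne, not_false_iff, mul_zero, zero_mul, neg_zero]
  abel

lemma trv_comm_left (u v l : Fin n) (huv : u ≠ v) (hvl : v ≠ l) (hul : u ≠ l)
    (x y : R) : transvection u v x * transvection v l y * transvection u v (-x)
      = transvection u l (x*y) * transvection v l y := by
  simp only [transvection, expand3, std_neg, mul_neg, neg_mul, neg_neg, mul_add, add_mul,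
    one_mul, mul_one,
    single_mul_single_of_ne, single_mul_single_same,
    huv, hvl, hul, huv.symm, hvl.symm, hul.symm,
    Ne, not_false_iff, mul_zero, zero_mul, neg_zero]
  abel

lemma trv_comm_right (u v k : Fin n) (huv : u ≠ v) (hvk : v ≠ k) (hku : k ≠ u)
    (x y : R) : transvection u v x * transvection k u y * transvection u v (-x)
      = transvection k u y * transvection k v (-(y*x)) := by
  simp only [transvection, expand3, std_neg, mul_neg, neg_mul, neg_neg, mul_add, add_mul,
    one_mul, mul_one,
    single_mul_single_of_ne, single_mul_single_same,
    huv, hvk, hku, huv.symm, hvk.symm, hku.symm,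
    Ne, not_false_iff, mul_zero, zero_mul, neg_zero]
  abel

lemma trv_commutator (v h u : Fin n) (hvh : v ≠ h) (hhu : h ≠ u) (hvu : v ≠ u)
    (y₁ y₂ : R) : transvection v u (y₁*y₂)
      = transvection v h y₁ * transvection h u y₂ * transvection v h (-y₁)
        * transvection h u (-y₂) := by
  simp only [transvection, expand4, std_neg, mul_neg, neg_mul, neg_neg, mul_add, add_mul,
    one_mul, mul_one,
    single_mul_single_of_ne, single_mul_single_same,
    hvh, hhu, hvu, hvh.symm, hhu.symm, hvu.symm,
    Ne, not_false_iff, mul_zero, zero_mul, neg_zero]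
  abel

lemma trv_inv (u v : Fin n) (huv : u ≠ v) (x : R) :
    transvection u v (-x) * transvection u v x = 1 := by
  rw [transvection_mul_transvection_same _ _ huv, neg_add_cancel, transvection_zero]

lemma cross_of_conj {t tinv X Z : Matrix (Fin n) (Fin n) R} (h : t * X * tinv = Z)
    (h2 : tinv * t = 1) : t * X = Z * t := by
  rw [← h, mul_assoc (t*X), h2, mul_one]

lemma cross_disjoint (u v k l : Fin n) (huv : u ≠ v) (hkl : k ≠ l) (hvk : v ≠ k) (hul : u ≠ l)
    (x y : R) : transvection u v x * transvection k l y
      = transvection k l y * transvection u v x :=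
  cross_of_conj (trv_comm_disjoint u v k l huv hkl hvk hul x y) (trv_inv u v huv x)

lemma cross_left (u v l : Fin n) (huv : u ≠ v) (hvl : v ≠ l) (hul : u ≠ l)
    (x y : R) : transvection u v x * transvection v l y
      = (transvection u l (x*y) * transvection v l y) * transvection u v x :=
  cross_of_conj (trv_comm_left u v l huv hvl hul x y) (trv_inv u v huv x)

lemma cross_right (u v k : Fin n) (huv : u ≠ v) (hvk : v ≠ k) (hku : k ≠ u)
    (x y : R) : transvection u v x * transvection k u y
      = (transvection k u y * transvection k v (-(y*x))) * transvection u v x :=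
  cross_of_conj (trv_comm_right u v k huv hvk hku x y) (trv_inv u v huv x)

lemma cross_four {t F1 F2 F3 F4 G1 G2 G3 G4 : Matrix (Fin n) (Fin n) R}
    (c1 : t*F1 = G1*t) (c2 : t*F2 = G2*t) (c3 : t*F3 = G3*t) (c4 : t*F4 = G4*t) :
    t * (F1*F2*F3*F4) = (G1*(G2*(G3*G4)))*t := by
  calc t * (F1*F2*F3*F4) = (t*F1)*(F2*(F3*F4)) := by noncomm_ring
  _ = G1*((t*F2)*(F3*F4)) := by rw [c1]; noncomm_ring
  _ = G1*(G2*((t*F3)*F4)) := by rw [c2]; noncomm_ring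
  _ = G1*(G2*(G3*(t*F4))) := by rw [c3]; noncomm_ring
  _ = (G1*(G2*(G3*G4)))*t := by rw [c4]; noncomm_ring

lemma map_transvection {R' : Type*} [CommRing R'] (f : R →+* R') (i j : Fin n) (c : R) :
    (transvection i j c).map f = transvection i j (f c) := by
  ext a b
  simp [transvection, Matrix.map_apply, Matrix.add_apply, Matrix.one_apply, Matrix.single,
    Matrix.of_apply, apply_ite f, _root_.map_zero, _root_.map_one, _root_.map_add]

lemma exists_third (hn : 3 ≤ n) (u v : Fin n) : ∃ h : Fin n, h ≠ u ∧ h ≠ v := by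
  by_contra hc
  push_neg at hc
  have hsub : (Finset.univ : Finset (Fin n)) ⊆ {u, v} := by
    intro x _
    rcases eq_or_ne x u with rfl | hxu
    · simp
    · simp [hc x hxu]
  have h1 := Finset.card_le_card hsub
  have h2 := Finset.card_insert_le u ({v} : Finset (Fin n))
  simp [Finset.card_univ] at h1 h2
  omega

end MatrixIdentities

section Degrees

def gdeg (m : ℕ) : ℕ := 2^(m+1) - 2

lemma gdeg_succ (j : ℕ) : gdeg (j+1) = 2 * gdeg j + 2 := by
  have h : 1 ≤ 2^(j+1) := Nat.one_le_two_pow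
  unfold gdeg
  rw [pow_succ 2 (j+1)]
  omega

variable {A B C : Type*} [CommRing A] [CommRing B] [CommRing C]
variable (ρ : A →+* B) (g : B →+* C)

/-- Subgroup of matrices generated by transvections with entries `g (ρ (σ^k) * b)`. -/
def Pdeg (σa : A) (k : ℕ) : Submonoid (Matrix (Fin n) (Fin n) C) :=
  Submonoid.closure {M | ∃ i j b, i ≠ j ∧ M = transvection i j (g (ρ (σa ^ k) * b))}

lemma mem_Pdeg {σa : A} {k : ℕ} {i j : Fin n} (hij : i ≠ j) {c : C} (b : B)
    (hc : c = g (ρ (σa^k) * b)) : transvection i j c ∈ Pdeg (n := n) ρ g σa k :=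
  Submonoid.subset_closure ⟨i, j, b, hij, by rw [hc]⟩

lemma Pdeg_mono (σa : A) {k d : ℕ} : Pdeg (n := n) ρ g σa (k+d) ≤ Pdeg (n := n) ρ g σa k := by
  rw [Pdeg, Submonoid.closure_le]
  rintro M ⟨i, j, b, hij, rfl⟩
  exact mem_Pdeg ρ g hij (ρ (σa^d) * b) (by rw [pow_add, _root_.map_mul ρ]; exact congrArg g (by ring))

lemma cross_one (hn : 3 ≤ n) {u v : Fin n} (huv : u ≠ v) {x : C} {σa a : A}
    (hx : x * g (ρ σa) = g (ρ a)) (k : ℕ) {X : Matrix (Fin n) (Fin n) C}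
    (hX : X ∈ Pdeg (n := n) ρ g σa (2*k+2)) :
    ∃ X' ∈ Pdeg (n := n) ρ g σa k, transvection u v x * X = X' * transvection u v x := by
  have key : ∀ w : B, x * g (ρ σa * w) = g (ρ a * w) := fun w => by
    rw [_root_.map_mul g, _root_.map_mul g, ← mul_assoc, hx]
  have pw : ∀ (m : ℕ) (w : B), ρ (σa^(m+1)) * w = ρ σa * (ρ (σa^m) * w) := fun m w => by
    rw [pow_succ', _root_.map_mul ρ, mul_assoc]
  induction hX using Submonoid.closure_induction with
  | one => exact ⟨1, one_mem _, by rw [mul_one, one_mul]⟩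
  | mul X Y hXc hYc ihX ihY =>
    obtain ⟨X', hX', eX⟩ := ihX
    obtain ⟨Y', hY', eY⟩ := ihY
    exact ⟨X' * Y', mul_mem hX' hY', by
      rw [← mul_assoc, eX, mul_assoc, eY]; noncomm_ring⟩
  | mem X hXs =>
    obtain ⟨k0, l0, b, hkl, rfl⟩ := hXs
    by_cases h1 : v = k0 <;> by_cases h2 : u = l0
    · -- hard case : X = transvection v u y
      subst h1; subst h2
      obtain ⟨h, hhu, hhv⟩ := exists_third hn u v
      set y₁ : C := g (ρ (σa^(k+1)) * b) with hy₁
      set y₂ : C := g (ρ (σa^(k+1)) * 1) with hy₂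
      have hy : g (ρ (σa^(2*k+2)) * b) = y₁ * y₂ := by
        rw [hy₁, hy₂, ← _root_.map_mul g, show 2*k+2 = (k+1)+(k+1) from by ring, pow_add,
          _root_.map_mul ρ]
        exact congrArg g (by ring)
      have hdec : transvection v u (g (ρ (σa^(2*k+2)) * b))
          = transvection v h y₁ * transvection h u y₂ * transvection v h (-y₁)
            * transvection h u (-y₂) := by
        rw [hy]
        exact trv_commutator v h u hhv.symm hhu huv.symm y₁ y₂
      have c1 := cross_left u v h huv hhv.symm hhu.symm x y₁
      have c2 := cross_right u v h huv hhv.symm hhu x y₂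
      have c3 := cross_left u v h huv hhv.symm hhu.symm x (-y₁)
      have c4 := cross_right u v h huv hhv.symm hhu x (-y₂)
      refine ⟨_, ?_, by rw [hdec]; exact cross_four c1 c2 c3 c4⟩
      have m1 : transvection u h (x * y₁) ∈ Pdeg (n := n) ρ g σa k :=
        mem_Pdeg ρ g hhu.symm (ρ a * b) (by
          rw [hy₁, pw k b, key]; exact congrArg g (by ring))
      have m2 : transvection v h y₁ ∈ Pdeg (n := n) ρ g σa k :=
        mem_Pdeg ρ g hhv.symm (ρ σa * b) (by
          rw [hy₁, pw k b]; exact congrArg g (by ring))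
      have m3 : transvection h u y₂ ∈ Pdeg (n := n) ρ g σa k :=
        mem_Pdeg ρ g hhu (ρ σa * 1) (by
          rw [hy₂, pw k 1]; exact congrArg g (by ring))
      have m4 : transvection h v (-(y₂ * x)) ∈ Pdeg (n := n) ρ g σa k :=
        mem_Pdeg ρ g hhv (-(ρ a * 1)) (by
          rw [mul_comm y₂ x, hy₂, pw k 1, key, ← _root_.map_neg g]
          exact congrArg g (by ring))
      have m1' : transvection u h (x * -y₁) ∈ Pdeg (n := n) ρ g σa k :=
        mem_Pdeg ρ g hhu.symm (-(ρ a * b)) (by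
          rw [hy₁, ← _root_.map_neg g,
            show -(ρ (σa^(k+1)) * b) = ρ σa * (ρ (σa^k) * (-b)) from by rw [pw k b]; ring,
            key]
          exact congrArg g (by ring))
      have m2' : transvection v h (-y₁) ∈ Pdeg (n := n) ρ g σa k :=
        mem_Pdeg ρ g hhv.symm (-(ρ σa * b)) (by
          rw [hy₁, ← _root_.map_neg g, pw k b]; exact congrArg g (by ring))
      have m3' : transvection h u (-y₂) ∈ Pdeg (n := n) ρ g σa k :=
        mem_Pdeg ρ g hhu (-(ρ σa * 1)) (by
          rw [hy₂, ← _root_.map_neg g, pw k 1]; exact congrArg g (by ring))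
      have m4' : transvection h v (-(-y₂ * x)) ∈ Pdeg (n := n) ρ g σa k :=
        mem_Pdeg ρ g hhv (ρ a * 1) (by
          rw [neg_mul, neg_neg, mul_comm y₂ x, hy₂, pw k 1, key]
          exact congrArg g (by ring))
      exact mul_mem (mul_mem m1 m2)
        (mul_mem (mul_mem m3 m4) (mul_mem (mul_mem m1' m2') (mul_mem m3' m4')))
    · -- v = k0, u ≠ l0
      subst h1
      have e : x * g (ρ (σa^(2*k+2)) * b) = g (ρ (σa^k) * (ρ a * (ρ (σa^(k+1)) * b))) := by
        rw [show (2*k+2) = (2*k+1)+1 from by ring, pw (2*k+1) b, key,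
          show 2*k+1 = k + (k+1) from by ring, pow_add, _root_.map_mul ρ]
        exact congrArg g (by ring)
      refine ⟨transvection u l0 (x * g (ρ (σa^(2*k+2)) * b))
          * transvection v l0 (g (ρ (σa^(2*k+2)) * b)), ?_,
        cross_left u v l0 huv hkl h2 x _⟩
      refine mul_mem (mem_Pdeg ρ g h2 _ e) (mem_Pdeg ρ g hkl (ρ (σa^(k+2)) * b) ?_)
      rw [show 2*k+2 = k + (k+2) from by ring, pow_add, _root_.map_mul ρ]
      exact congrArg g (by ring)
    · -- u = l0, v ≠ k0
      subst h2
      have e : g (ρ (σa^(2*k+2)) * b) * x = g (ρ (σa^k) * (ρ a * (ρ (σa^(k+1)) * b))) := by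
        rw [mul_comm, show (2*k+2) = (2*k+1)+1 from by ring, pw (2*k+1) b, key,
          show 2*k+1 = k + (k+1) from by ring, pow_add, _root_.map_mul ρ]
        exact congrArg g (by ring)
      refine ⟨transvection k0 u (g (ρ (σa^(2*k+2)) * b))
          * transvection k0 v (-(g (ρ (σa^(2*k+2)) * b) * x)), ?_,
        cross_right u v k0 huv (fun hh => h1 hh) hkl x _⟩
      refine mul_mem (mem_Pdeg ρ g hkl (ρ (σa^(k+2)) * b) ?_)
        (mem_Pdeg ρ g (fun hh => h1 hh.symm) (-(ρ a * (ρ (σa^(k+1)) * b))) ?_)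
      · rw [show 2*k+2 = k + (k+2) from by ring, pow_add, _root_.map_mul ρ]
        exact congrArg g (by ring)
      · rw [e, ← _root_.map_neg g]
        exact congrArg g (by ring)
    · -- disjoint
      refine ⟨transvection k0 l0 (g (ρ (σa^(2*k+2)) * b)), ?_,
        cross_disjoint u v k0 l0 huv hkl h1 h2 x _⟩
      exact mem_Pdeg ρ g hkl (ρ (σa^(k+2)) * b)
        (by rw [show 2*k+2 = k + (k+2) from by ring, pow_add, _root_.map_mul ρ]
            exact congrArg g (by ring))

lemma cross_word (hn : 3 ≤ n) (σa : A) (L : List (Matrix (Fin n) (Fin n) C))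
    (hL : ∀ M ∈ L, ∃ (u v : Fin n) (x : C) (a : A), u ≠ v ∧ M = transvection u v x
      ∧ x * g (ρ σa) = g (ρ a)) :
    ∀ (j : ℕ) (X : Matrix (Fin n) (Fin n) C), X ∈ Pdeg (n := n) ρ g σa (gdeg (L.length + j)) →
      ∃ X' ∈ Pdeg (n := n) ρ g σa (gdeg j), L.prod * X = X' * L.prod := by
  induction L with
  | nil => exact fun j X hX => ⟨X, by simpa using hX, by simp⟩
  | cons M L ih =>
    intro j X hX
    obtain ⟨u, v, x, a, huv, rfl, hx⟩ := hL M List.mem_cons_self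
    have hX' : X ∈ Pdeg (n := n) ρ g σa (gdeg (L.length + (j+1))) := by
      rwa [show L.length + (j+1) = (transvection u v x :: L).length + j from by
        simp [List.length_cons]; ring]
    obtain ⟨X₁, hX₁, e₁⟩ := ih (fun M hM => hL M (List.mem_cons_of_mem _ hM)) (j+1) X hX'
    have hX₁' : X₁ ∈ Pdeg (n := n) ρ g σa (2 * gdeg j + 2) := by rwa [← gdeg_succ]
    obtain ⟨X₂, hX₂, e₂⟩ := cross_one ρ g hn huv hx (gdeg j) hX₁'
    exact ⟨X₂, hX₂, by rw [List.prod_cons, mul_assoc, e₁, ← mul_assoc, e₂, mul_assoc]⟩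

lemma Pdeg_elem {σa : A} {k : ℕ} {X : Matrix (Fin n) (Fin n) C}
    (hX : X ∈ Pdeg (n := n) ρ g σa k) :
    ∃ E' : Matrix (Fin n) (Fin n) B, IsElementary E' ∧ X = E'.map g := by
  induction hX using Submonoid.closure_induction with
  | one => exact ⟨1, one_mem _, (Matrix.map_one _ (_root_.map_zero g) (_root_.map_one g)).symm⟩
  | mul X Y hXc hYc ihX ihY =>
    obtain ⟨E₁, h₁, rfl⟩ := ihX
    obtain ⟨E₂, h₂, rfl⟩ := ihY
    exact ⟨E₁ * E₂, mul_mem h₁ h₂, by rw [Matrix.map_mul]⟩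
  | mem X hXs =>
    obtain ⟨i, j, b, hij, rfl⟩ := hXs
    exact ⟨transvection i j (ρ (σa^k) * b),
      Submonoid.subset_closure ⟨i, j, _, hij, rfl⟩, (map_transvection g i j _).symm⟩

end Degrees

section Karoubi

variable {A B : Type*} [CommRing A] [CommRing B] (S : Submonoid A) (ρ : A →+* B)

lemma karoubi_split
    (hiso : ∀ s ∈ S, Function.Bijective
      (Ideal.quotientMap (Ideal.span {ρ s}) ρ (span_le_comap_span ρ s)))
    {s : A} (hs : s ∈ S) (b : B) : ∃ a b', b = ρ a + ρ s * b' := by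
  obtain ⟨x, hx⟩ := (hiso s hs).2 (Ideal.Quotient.mk _ b)
  obtain ⟨a, rfl⟩ := Ideal.Quotient.mk_surjective x
  rw [Ideal.quotientMap_mk] at hx
  have hmem : ρ a - b ∈ Ideal.span {ρ s} := Ideal.Quotient.eq.mp hx
  obtain ⟨b', hb'⟩ := Ideal.mem_span_singleton'.mp hmem
  exact ⟨a, -b', by linear_combination hb'⟩

lemma common_denom {n : ℕ} (L : List (Matrix (Fin n) (Fin n) (Localization S)))
    (hL : ∀ M ∈ L, IsElemMat M) :
    ∃ σ : S, ∀ M ∈ L, ∃ (u v : Fin n) (c : Localization S) (a : A), u ≠ v ∧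
      M = transvection u v c ∧ c * algebraMap A (Localization S) (σ : A)
        = algebraMap A (Localization S) a := by
  induction L with
  | nil => exact ⟨1, by simp⟩
  | cons M L ih =>
    obtain ⟨σ', hσ'⟩ := ih (fun M hM => hL M (List.mem_cons_of_mem _ hM))
    obtain ⟨u, v, c, huv, rfl⟩ := hL M List.mem_cons_self
    obtain ⟨⟨a, s⟩, hs⟩ := IsLocalization.surj (M := S) c
    refine ⟨s * σ', ?_⟩
    intro M' hM'
    rcases List.mem_cons.mp hM' with rfl | hM'
    · refine ⟨u, v, c, a * σ', huv, rfl, ?_⟩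
      rw [Submonoid.coe_mul, _root_.map_mul, ← mul_assoc, hs, ← _root_.map_mul]
    · obtain ⟨u', v', c', a', hu', rfl, hc'⟩ := hσ' M' hM'
      refine ⟨u', v', c', a' * s, hu', rfl, ?_⟩
      rw [Submonoid.coe_mul, _root_.map_mul,
        show c' * (algebraMap A (Localization S) (s : A)
            * algebraMap A (Localization S) (σ' : A))
          = (c' * algebraMap A (Localization S) (σ' : A))
            * algebraMap A (Localization S) (s : A) from by ring,
        hc', ← _root_.map_mul]

end Karoubi

end ElemKaroubi


open ElemKaroubi in
/-- For a Karoubi square, `E_n(ρ(S)⁻¹B) = E_n(B) · E_n(S⁻¹A)` for `n ≥ 3`. -/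
theorem elementary_decomposition_karoubi_square
    {A B : Type*} [CommRing A] [CommRing B] (S : Submonoid A) (ρ : A →+* B)
    (hS : S ≤ nonZeroDivisors A)
    (hρS : ∀ s ∈ S, ρ s ∈ nonZeroDivisors B)
    (hiso : ∀ s ∈ S, Function.Bijective
      (Ideal.quotientMap (Ideal.span {ρ s}) ρ (span_le_comap_span ρ s)))
    (n : ℕ) (hn : 3 ≤ n)
    (E : Matrix (Fin n) (Fin n) (Localization (S.map ρ))) (hE : IsElementary E) :
    ∃ (E₁ : Matrix (Fin n) (Fin n) B) (E₂ : Matrix (Fin n) (Fin n) (Localization S)),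
      IsElementary E₁ ∧ IsElementary E₂ ∧
      E = (E₁.map (algebraMap B (Localization (S.map ρ)))) *
          (E₂.map (IsLocalization.map (Localization (S.map ρ)) ρ (Submonoid.le_comap_map S))) := by
  classical
  set β : B →+* Localization (S.map ρ) := algebraMap B (Localization (S.map ρ)) with hβ
  set φ : Localization S →+* Localization (S.map ρ)
    := IsLocalization.map (Localization (S.map ρ)) ρ (Submonoid.le_comap_map S) with hφ
  have φcomp : ∀ a : A, φ (algebraMap A (Localization S) a) = β (ρ a) := fun a =>
    IsLocalization.map_eq (Submonoid.le_comap_map S) a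
  have hE' : E ∈ Submonoid.closure {E : Matrix (Fin n) (Fin n) (Localization (S.map ρ)) | IsElemMat E} := hE
  clear hE
  induction hE' using Submonoid.closure_induction_right with
  | one =>
    exact ⟨1, 1, one_mem _, one_mem _, by
      rw [Matrix.map_one _ (map_zero _) (map_one _), Matrix.map_one _ (map_zero _) (map_one _),
        one_mul]⟩
  | mul_right x hx y hy ih =>
    obtain ⟨E₁, E₂, h1, h2, rfl⟩ := ih
    obtain ⟨i, j, z, hij, rfl⟩ := hy
    obtain ⟨L, hLmem, hLprod⟩ := Submonoid.exists_list_of_mem_closure h2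
    obtain ⟨σ, hσ⟩ := common_denom S L hLmem
    set Lφ : List (Matrix (Fin n) (Fin n) (Localization (S.map ρ))) := L.map (RingHom.mapMatrix φ) with hLφdef
    have hLφlen : Lφ.length = L.length := by simp [hLφdef]
    have hLφprod : Lφ.prod = E₂.map φ := by
      have h0 : Lφ.prod = (RingHom.mapMatrix φ) L.prod := (map_list_prod _ L).symm
      rw [h0, hLprod, RingHom.mapMatrix_apply]
    have hLφlet : ∀ M' ∈ Lφ, ∃ (u v : Fin n) (xx : Localization (S.map ρ)) (a : A), u ≠ v ∧
        M' = Matrix.transvection u v xx ∧ xx * β (ρ (σ : A)) = β (ρ a) := by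
      intro M' hM'
      obtain ⟨M, hM, rfl⟩ := List.mem_map.mp hM'
      obtain ⟨u, v, c, a, huv, rfl, hc⟩ := hσ M hM
      refine ⟨u, v, φ c, a, huv,
        by rw [RingHom.mapMatrix_apply, map_transvection], ?_⟩
      have hc2 := congrArg φ hc
      rwa [_root_.map_mul, φcomp, φcomp] at hc2
    obtain ⟨⟨b, t⟩, hzt⟩ := IsLocalization.surj (M := S.map ρ) z
    obtain ⟨s, hsS, hst⟩ := Submonoid.mem_map.mp t.2
    obtain ⟨a₁, b₀, hb⟩ := karoubi_split S ρ hiso hsS b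
    set N := gdeg L.length with hN
    have hσN : (σ : A)^N ∈ S := pow_mem σ.2 N
    obtain ⟨a₂, b', hb₀⟩ := karoubi_split S ρ hiso hσN b₀
    set c₁ : Localization S := IsLocalization.mk' (Localization S) a₁ ⟨s, hsS⟩ with hc₁def
    have hc₁ : φ c₁ * β (ρ s) = β (ρ a₁) := by
      have h0 := IsLocalization.mk'_spec (Localization S) a₁ ⟨s, hsS⟩
      have h1 := congrArg φ h0
      rwa [_root_.map_mul, φcomp, φcomp] at h1
    have hu : IsUnit (β (ρ s)) := by rw [hst]; exact IsLocalization.map_units (Localization (S.map ρ)) t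
    rw [← hβ] at hzt
    dsimp only at hzt
    have hz0 : z = φ c₁ + β b₀ := by
      apply hu.mul_left_cancel
      rw [mul_add, mul_comm (β (ρ s)) (φ c₁), hc₁, ← _root_.map_mul β, ← _root_.map_add β,
        ← hb, mul_comm (β (ρ s)) z, hst, hzt]
    have hz : z = β (ρ ((σ : A)^N) * b') + (β (ρ a₂) + φ c₁) := by
      rw [hz0, hb₀, _root_.map_add β]
      ring
    have hT : Matrix.transvection i j z
        = Matrix.transvection i j (β (ρ ((σ : A)^N) * b'))
          * (Matrix.transvection i j (β (ρ a₂)) * Matrix.transvection i j (φ c₁)) := by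
      rw [Matrix.transvection_mul_transvection_same _ _ hij,
          Matrix.transvection_mul_transvection_same _ _ hij, hz]
    have hlen : gdeg (Lφ.length + 0) = N := by rw [hLφlen, hN, Nat.add_zero]
    have hmem : Matrix.transvection i j (β (ρ ((σ : A)^N) * b'))
        ∈ Pdeg (n := n) ρ β (σ : A) (gdeg (Lφ.length + 0)) :=
      mem_Pdeg ρ β hij b' (by rw [hlen])
    obtain ⟨X', hX', ecross⟩ := cross_word ρ β hn (σ : A) Lφ hLφlet 0 _ hmem
    obtain ⟨E₁', hE₁', hXE⟩ := Pdeg_elem ρ β hX'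
    refine ⟨E₁ * E₁', E₂ * Matrix.transvection i j (algebraMap A (Localization S) a₂)
        * Matrix.transvection i j c₁, mul_mem h1 hE₁',
      mul_mem (mul_mem h2 (Submonoid.subset_closure ⟨i, j, _, hij, rfl⟩))
        (Submonoid.subset_closure ⟨i, j, c₁, hij, rfl⟩), ?_⟩
    have e2 : E₂.map φ * Matrix.transvection i j (β (ρ ((σ : A)^N) * b'))
        = X' * E₂.map φ := by rw [← hLφprod]; exact ecross
    calc (E₁.map β) * (E₂.map φ) * Matrix.transvection i j z
        = E₁.map β * (E₂.map φ * Matrix.transvection i j (β (ρ ((σ : A)^N) * b')))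
          * (Matrix.transvection i j (β (ρ a₂)) * Matrix.transvection i j (φ c₁)) := by
          rw [hT]; noncomm_ring
      _ = E₁.map β * (X' * E₂.map φ)
          * (Matrix.transvection i j (β (ρ a₂)) * Matrix.transvection i j (φ c₁)) := by
          rw [e2]
      _ = (E₁.map β * X') * (E₂.map φ * Matrix.transvection i j (β (ρ a₂))
          * Matrix.transvection i j (φ c₁)) := by noncomm_ring
      _ = ((E₁ * E₁').map β) * ((E₂ * Matrix.transvection i j (algebraMap A (Localization S) a₂)
          * Matrix.transvection i j c₁).map φ) := by
          rw [hXE, Matrix.map_mul, Matrix.map_mul, Matrix.map_mul,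
            map_transvection φ, map_transvection φ, φcomp]
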